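/- There is a language over a powerset alphabet that is monotone and FO-definable but not FO+-definable; namely K = (↑a↑b↑c)* + A*⊤A* over A = P({a,b,c}). Hence Lyndon's preservation theorem fails on finite words. -/

import Mathlib

/-- Componentwise extension of the order on the alphabet `A` to words. -/
def WordLe {A : Type} [PartialOrder A] (u v : List A) : Prop :=
  u.length = v.length ∧ ∀ (i : ℕ) (a b : A), u[i]? = some a → v[i]? = some b → a ≤ b

/-- A language is monotone if it is closed under componentwise replacement
of letters by larger ones. -/
def MonotoneLang {A : Type} [PartialOrder A] (L : Set (List A)) : Prop :=
  ∀ u v, WordLe u v → u ∈ L → v ∈ L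
/-- Syntax of positive first-order logic on words. -/
inductive FOp (A : Type) where
  | atom (a : A) (x : ℕ)
  | le (x y : ℕ)
  | lt (x y : ℕ)
  | and (φ ψ : FOp A)
  | or (φ ψ : FOp A)
  | ex (x : ℕ) (φ : FOp A)
  | all (x : ℕ) (φ : FOp A)

/-- Semantics of `FOp` formulas on words. -/
def FOp.Sat {A : Type} [PartialOrder A] (u : List A) (α : ℕ → ℕ) : FOp A → Prop
  | atom a x => ∃ b, u[α x]? = some b ∧ a ≤ b
  | le x y => α x ≤ α y
  | lt x y => α x < α y
  | and φ ψ => FOp.Sat u α φ ∧ FOp.Sat u α ψ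
  | or φ ψ => FOp.Sat u α φ ∨ FOp.Sat u α ψ
  | ex x φ => ∃ i, i < u.length ∧ FOp.Sat u (Function.update α x i) φ
  | all x φ => ∀ i, i < u.length → FOp.Sat u (Function.update α x i) φ

/-- Quantifier rank. -/
def FOp.qr {A : Type} : FOp A → ℕ
  | atom _ _ => 0
  | le _ _ => 0
  | lt _ _ => 0
  | and φ ψ => max φ.qr ψ.qr
  | or φ ψ => max φ.qr ψ.qr
  | ex _ φ => φ.qr + 1
  | all _ φ => φ.qr + 1

/-- Free variables. -/
def FOp.fv {A : Type} : FOp A → Finset ℕ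
  | atom _ x => {x}
  | le x y => {x, y}
  | lt x y => {x, y}
  | and φ ψ => φ.fv ∪ ψ.fv
  | or φ ψ => φ.fv ∪ ψ.fv
  | ex x φ => φ.fv.erase x
  | all x φ => φ.fv.erase x

/-- A language is FO⁺-definable if it is the set of words satisfying some
FO⁺ sentence. -/
def FOpDefinable {A : Type} [PartialOrder A] (L : Set (List A)) : Prop :=
  ∃ φ : FOp A, φ.fv = ∅ ∧ L = {u | FOp.Sat u (fun _ => 0) φ}
/-- Syntax of full first-order logic on words (with negation and exact
letter predicates). -/
inductive FOf (A : Type) where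
  | letter (a : A) (x : ℕ)
  | le (x y : ℕ)
  | lt (x y : ℕ)
  | not (φ : FOf A)
  | and (φ ψ : FOf A)
  | or (φ ψ : FOf A)
  | ex (x : ℕ) (φ : FOf A)
  | all (x : ℕ) (φ : FOf A)

/-- Semantics of `FOf` formulas on words. -/
def FOf.Sat {A : Type} (u : List A) (α : ℕ → ℕ) : FOf A → Prop
  | letter a x => u[α x]? = some a
  | le x y => α x ≤ α y
  | lt x y => α x < α y
  | not φ => ¬ FOf.Sat u α φ
  | and φ ψ => FOf.Sat u α φ ∧ FOf.Sat u α ψ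
  | or φ ψ => FOf.Sat u α φ ∨ FOf.Sat u α ψ
  | ex x φ => ∃ i, i < u.length ∧ FOf.Sat u (Function.update α x i) φ
  | all x φ => ∀ i, i < u.length → FOf.Sat u (Function.update α x i) φ

/-- Free variables. -/
def FOf.fv {A : Type} : FOf A → Finset ℕ
  | letter _ x => {x}
  | le x y => {x, y}
  | lt x y => {x, y}
  | not φ => φ.fv
  | and φ ψ => φ.fv ∪ ψ.fv
  | or φ ψ => φ.fv ∪ ψ.fv
  | ex x φ => φ.fv.erase x
  | all x φ => φ.fv.erase x

/-- A language is FO-definable if it is the set of words satisfying some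
FO sentence. -/
def FODefinable {A : Type} (L : Set (List A)) : Prop :=
  ∃ φ : FOf A, φ.fv = ∅ ∧ L = {u | FOf.Sat u (fun _ => 0) φ}
/-- The powerset alphabet `𝒫({a,b,c})`, ordered by inclusion. -/
abbrev AB : Type := Finset (Fin 3)

def la : AB := {0}
def lb : AB := {1}
def lc : AB := {2}
def top3 : AB := Finset.univ

/-- Words in `(↑a ↑b ↑c)*` : concatenations of three-letter blocks whose
letters contain `a`, `b`, `c` respectively. -/
inductive KBlocks : List AB → Prop
  | nil : KBlocks []
  | cons {s t r : AB} {w : List AB} :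
      (0 : Fin 3) ∈ s → (1 : Fin 3) ∈ t → (2 : Fin 3) ∈ r →
      KBlocks w → KBlocks (s :: t :: r :: w)

/-- The language `K = (↑a ↑b ↑c)* + A* ⊤ A*`. -/
def K : Set (List AB) := {u | KBlocks u ∨ top3 ∈ u}

open Fin.CommRing

/-- Semantic characterization of `KBlocks`. -/
def Good (u : List AB) : Prop :=
  3 ∣ u.length ∧ ∀ (i : ℕ) (s : AB), u[i]? = some s → ((i : Fin 3)) ∈ s

lemma natCast_fin3_add3 (m : ℕ) : ((m + 3 : ℕ) : Fin 3) = (m : Fin 3) := by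
  push_cast
  simp

lemma kblocks_good {u : List AB} (h : KBlocks u) : Good u := by
  induction h with
  | nil => exact ⟨⟨0, rfl⟩, by intro i s hs; simp at hs⟩
  | @cons s t r w hs ht hr _ ih =>
    obtain ⟨hd, hmem⟩ := ih
    constructor
    · simp only [List.length_cons]
      omega
    · intro i x hx
      match i with
      | 0 => simp at hx; subst hx; simpa using hs
      | 1 => simp at hx; subst hx; simpa using ht
      | 2 => simp at hx; subst hx; simpa using hr
      | (m+3) =>
        have : w[m]? = some x := by simpa using hx
        have := hmem m x this
        simpa [natCast_fin3_add3] using this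

lemma good_kblocks_aux (k : ℕ) : ∀ u : List AB, Good u → u.length = 3 * k → KBlocks u := by
  induction k with
  | zero =>
    intro u _ hlen
    have : u = [] := List.length_eq_zero_iff.1 (by omega)
    subst this; exact KBlocks.nil
  | succ k ih =>
    intro u hu hlen
    match u with
    | s :: t :: r :: w =>
      have hmem := hu.2
      have hwlen : w.length = 3 * k := by
        simp only [List.length_cons] at hlen; omega
      have hw : Good w := by
        refine ⟨⟨k, hwlen⟩, ?_⟩
        intro i x hx
        have : (s :: t :: r :: w)[i+3]? = some x := by simpa using hx
        have := hmem (i+3) x this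
        simpa [natCast_fin3_add3] using this
      refine KBlocks.cons ?_ ?_ ?_ (ih w hw hwlen)
      · simpa using hmem 0 s (by simp)
      · simpa using hmem 1 t (by simp)
      · simpa using hmem 2 r (by simp)

lemma good_kblocks {u : List AB} (h : Good u) : KBlocks u := by
  obtain ⟨k, hk⟩ := h.1
  exact good_kblocks_aux k u h hk

lemma kblocks_iff_good (u : List AB) : KBlocks u ↔ Good u :=
  ⟨kblocks_good, good_kblocks⟩

lemma monotone_K : MonotoneLang K := by
  rintro u v ⟨hlen, hle⟩ (hK | hK)
  · left
    obtain ⟨hd, hmem⟩ := kblocks_good hK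
    refine good_kblocks ⟨hlen ▸ hd, ?_⟩
    intro i s' hs'
    have hi : i < u.length := by
      rw [hlen]; exact (List.getElem?_eq_some_iff.1 hs').1
    have hs : u[i]? = some u[i] := List.getElem?_eq_some_iff.2 ⟨hi, rfl⟩
    exact (hle i _ _ hs hs') (hmem i _ hs)
  · right
    obtain ⟨i, hi, hget⟩ := List.mem_iff_getElem.1 hK
    have hi' : i < v.length := hlen ▸ hi
    have h := hle i u[i] v[i] (List.getElem?_eq_some_iff.2 ⟨hi, rfl⟩)
      (List.getElem?_eq_some_iff.2 ⟨hi', rfl⟩)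
    rw [hget] at h
    have : v[i] = top3 := by
      have : v[i] ⊆ top3 := Finset.subset_univ _
      exact Finset.Subset.antisymm this h
    exact this ▸ List.getElem_mem hi'

/-! ### Part 3: K is not FO⁺-definable -/

def spat (i : ℕ) : AB := {(i : Fin 3)}
def dpat (i : ℕ) : AB := {(i : Fin 3), (i : Fin 3) + 1}
def vpat (N q : ℕ) : AB := if q ≤ 3*N then dpat q else dpat (q-1)

def uw (N : ℕ) : List AB := List.ofFn (n := 6*N) fun i => spat i
def vw (N : ℕ) : List AB := List.ofFn (n := 6*N+1) fun j => vpat N j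

lemma uw_length (N : ℕ) : (uw N).length = 6*N := by simp [uw]
lemma vw_length (N : ℕ) : (vw N).length = 6*N+1 := by simp [vw]

lemma uw_getElem? {N p : ℕ} {b : AB} : (uw N)[p]? = some b ↔ (p < 6*N ∧ b = spat p) := by
  constructor
  · intro h
    obtain ⟨h1, h2⟩ := List.getElem?_eq_some_iff.1 h
    have hp : p < 6*N := by simpa [uw] using h1
    refine ⟨hp, ?_⟩
    rw [← h2]; simp [uw]
  · rintro ⟨h1, rfl⟩
    refine List.getElem?_eq_some_iff.2 ⟨by simpa [uw] using h1, ?_⟩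
    simp [uw]

lemma vw_getElem? {N q : ℕ} {b : AB} : (vw N)[q]? = some b ↔ (q < 6*N+1 ∧ b = vpat N q) := by
  constructor
  · intro h
    obtain ⟨h1, h2⟩ := List.getElem?_eq_some_iff.1 h
    have hq : q < 6*N+1 := by simpa [vw] using h1
    refine ⟨hq, ?_⟩
    rw [← h2]; simp only [vw, List.getElem_ofFn]
  · rintro ⟨h1, rfl⟩
    refine List.getElem?_eq_some_iff.2 ⟨by simpa [vw] using h1, ?_⟩
    simp only [vw, List.getElem_ofFn]

lemma spat_le_vpat0 {N p : ℕ} : spat p ≤ vpat N p := by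
  have : ∀ s : AB, spat p ≤ s ↔ (p : Fin 3) ∈ s := by
    intro s; simp [spat, Finset.le_iff_subset, Finset.singleton_subset_iff]
  rw [this]
  unfold vpat dpat
  by_cases h : p ≤ 3*N
  · simp [h]
  · simp only [h, if_false]
    have hp : 1 ≤ p := by omega
    have : ((p-1 : ℕ) : Fin 3) + 1 = ((p : ℕ) : Fin 3) := by
      have : ((p-1 : ℕ) : Fin 3) + ((1:ℕ) : Fin 3) = (((p-1) + 1 : ℕ) : Fin 3) := by push_cast; ring
      simpa [Nat.sub_add_cancel hp] using this
    rw [← this]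
    simp

lemma spat_le_vpat1 {N p : ℕ} (h : 3*N ≤ p) : spat p ≤ vpat N (p+1) := by
  have heq : ∀ s : AB, spat p ≤ s ↔ (p : Fin 3) ∈ s := by
    intro s; simp [spat, Finset.le_iff_subset, Finset.singleton_subset_iff]
  rw [heq]
  unfold vpat dpat
  by_cases h' : p + 1 ≤ 3*N
  · omega
  · simp [h']

lemma dpat_ne_top (i : ℕ) : dpat i ≠ top3 := by
  unfold dpat top3
  have : ∀ j : Fin 3, ({j, j+1} : AB) ≠ Finset.univ := by decide
  exact this _

lemma EF (N : ℕ) :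
    ∀ (φ : FOp AB) (r t0 t1 : ℕ) (α β : ℕ → ℕ),
    φ.qr ≤ r → t0 + 3^r ≤ t1 → 3*N + 3^(r+1) ≤ t1 → t1 ≤ 6*N - 1 →
    (∀ x, (α x ≤ t0 ∧ β x = α x) ∨ (t1 ≤ α x ∧ β x = α x + 1)) →
    FOp.Sat (uw N) α φ → FOp.Sat (vw N) β φ := by
  intro φ
  induction φ with
  | atom a x =>
    intro r t0 t1 α β _ hgap hmid htop hinv hs
    obtain ⟨b, hb, hab⟩ := hs
    obtain ⟨hp, rfl⟩ := uw_getElem?.1 hb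
    have hpow : 0 < 3^(r+1) := pow_pos (by norm_num) (r+1)
    rcases hinv x with ⟨h1, h2⟩ | ⟨h1, h2⟩
    · exact ⟨vpat N (β x), vw_getElem?.2 ⟨by omega, rfl⟩,
        le_trans hab (h2 ▸ spat_le_vpat0)⟩
    · refine ⟨vpat N (β x), vw_getElem?.2 ⟨by omega, rfl⟩, le_trans hab ?_⟩
      rw [h2]
      exact spat_le_vpat1 (by omega)
  | le x y =>
    intro r t0 t1 α β _ hgap _ _ hinv hs
    have hpow : 0 < 3^r := pow_pos (by norm_num) r
    simp only [FOp.Sat] at hs ⊢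
    rcases hinv x with ⟨h1, h2⟩ | ⟨h1, h2⟩ <;> rcases hinv y with ⟨h3, h4⟩ | ⟨h3, h4⟩ <;> omega
  | lt x y =>
    intro r t0 t1 α β _ hgap _ _ hinv hs
    have hpow : 0 < 3^r := pow_pos (by norm_num) r
    simp only [FOp.Sat] at hs ⊢
    rcases hinv x with ⟨h1, h2⟩ | ⟨h1, h2⟩ <;> rcases hinv y with ⟨h3, h4⟩ | ⟨h3, h4⟩ <;> omega
  | and φ ψ ihφ ihψ =>
    intro r t0 t1 α β hqr hgap hmid htop hinv hs
    simp only [FOp.qr, max_le_iff] at hqr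
    exact ⟨ihφ r t0 t1 α β hqr.1 hgap hmid htop hinv hs.1,
           ihψ r t0 t1 α β hqr.2 hgap hmid htop hinv hs.2⟩
  | or φ ψ ihφ ihψ =>
    intro r t0 t1 α β hqr hgap hmid htop hinv hs
    simp only [FOp.qr, max_le_iff] at hqr
    rcases hs with hs | hs
    · exact Or.inl (ihφ r t0 t1 α β hqr.1 hgap hmid htop hinv hs)
    · exact Or.inr (ihψ r t0 t1 α β hqr.2 hgap hmid htop hinv hs)
  | ex x φ ih =>
    intro r t0 t1 α β hqr hgap hmid htop hinv hs
    simp only [FOp.qr] at hqr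
    obtain ⟨r', rfl⟩ : ∃ r', r = r' + 1 := ⟨r - 1, by omega⟩
    have hq' : φ.qr ≤ r' := by omega
    have hpow : 0 < 3^r' := pow_pos (by norm_num) r'
    have hpow1 : (3:ℕ)^(r'+1) = 3^r' * 3 := pow_succ 3 r'
    have hpow2 : (3:ℕ)^(r'+1+1) = 3^r' * 9 := by rw [pow_succ, hpow1]; ring
    obtain ⟨i, hi, hsat⟩ := hs
    have hi6 : i < 6*N := by simpa [uw_length] using hi
    have upd : ∀ (j : ℕ) (t0' t1' : ℕ),
        t0' + 3^r' ≤ t1' → 3*N + 3^(r'+1) ≤ t1' → t1' ≤ 6*N-1 →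
        ((i ≤ t0' ∧ j = i) ∨ (t1' ≤ i ∧ j = i + 1)) →
        (∀ y, (α y ≤ t0' ∧ β y = α y) ∨ (t1' ≤ α y ∧ β y = α y + 1)) →
        FOp.Sat (vw N) (Function.update β x j) φ := by
      intro j t0' t1' h1 h2 h3 h4 h5
      apply ih r' t0' t1' (Function.update α x i) (Function.update β x j) hq' h1 h2 h3 _ hsat
      intro y
      rcases eq_or_ne y x with rfl | hne
      · simp only [Function.update_self]
        rcases h4 with ⟨ha, rfl⟩ | ⟨ha, rfl⟩
        · exact Or.inl ⟨ha, rfl⟩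
        · exact Or.inr ⟨ha, rfl⟩
      · simp only [Function.update_of_ne hne]
        exact h5 y
    by_cases h1 : i ≤ t0
    · exact ⟨i, by simp [vw_length]; omega,
        upd i t0 t1 (by omega) (by omega) htop (Or.inl ⟨h1, rfl⟩) hinv⟩
    · by_cases h2 : t1 ≤ i
      · exact ⟨i+1, by simp [vw_length]; omega,
          upd (i+1) t0 t1 (by omega) (by omega) htop (Or.inr ⟨h2, rfl⟩) hinv⟩
      · by_cases h3 : t1 ≤ i + 3^r'
        · refine ⟨i+1, by simp [vw_length]; omega,
            upd (i+1) t0 i (by omega) (by omega) (by omega) (Or.inr ⟨le_refl i, rfl⟩) ?_⟩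
          intro y
          rcases hinv y with ⟨ha, hb⟩ | ⟨ha, hb⟩
          · exact Or.inl ⟨ha, hb⟩
          · exact Or.inr ⟨by omega, hb⟩
        · refine ⟨i, by simp [vw_length]; omega,
            upd i i t1 (by omega) (by omega) htop (Or.inl ⟨le_refl i, rfl⟩) ?_⟩
          intro y
          rcases hinv y with ⟨ha, hb⟩ | ⟨ha, hb⟩
          · exact Or.inl ⟨by omega, hb⟩
          · exact Or.inr ⟨ha, hb⟩
  | all x φ ih =>
    intro r t0 t1 α β hqr hgap hmid htop hinv hs
    simp only [FOp.qr] at hqr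
    obtain ⟨r', rfl⟩ : ∃ r', r = r' + 1 := ⟨r - 1, by omega⟩
    have hq' : φ.qr ≤ r' := by omega
    have hpow : 0 < 3^r' := pow_pos (by norm_num) r'
    have hpow1 : (3:ℕ)^(r'+1) = 3^r' * 3 := pow_succ 3 r'
    have hpow2 : (3:ℕ)^(r'+1+1) = 3^r' * 9 := by rw [pow_succ, hpow1]; ring
    intro j hj
    have hj6 : j < 6*N+1 := by simpa [vw_length] using hj
    have upd : ∀ (i : ℕ) (t0' t1' : ℕ),
        t0' + 3^r' ≤ t1' → 3*N + 3^(r'+1) ≤ t1' → t1' ≤ 6*N-1 → i < 6*N →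
        ((i ≤ t0' ∧ j = i) ∨ (t1' ≤ i ∧ j = i + 1)) →
        (∀ y, (α y ≤ t0' ∧ β y = α y) ∨ (t1' ≤ α y ∧ β y = α y + 1)) →
        FOp.Sat (vw N) (Function.update β x j) φ := by
      intro i t0' t1' h1 h2 h3 hilt h4 h5
      have hsat := hs i (by simpa [uw_length] using hilt)
      apply ih r' t0' t1' (Function.update α x i) (Function.update β x j) hq' h1 h2 h3 _ hsat
      intro y
      rcases eq_or_ne y x with rfl | hne
      · simp only [Function.update_self]
        rcases h4 with ⟨ha, hb⟩ | ⟨ha, hb⟩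
        · exact Or.inl ⟨ha, hb⟩
        · exact Or.inr ⟨ha, hb⟩
      · simp only [Function.update_of_ne hne]
        exact h5 y
    by_cases h1 : j ≤ t0
    · exact upd j t0 t1 (by omega) (by omega) htop (by omega) (Or.inl ⟨h1, rfl⟩) hinv
    · by_cases h2 : t1 + 1 ≤ j
      · exact upd (j-1) t0 t1 (by omega) (by omega) htop (by omega)
          (Or.inr ⟨by omega, by omega⟩) hinv
      · by_cases h3 : t1 < j + 3^r'
        · refine upd (j-1) t0 (j-1) (by omega) (by omega) (by omega) (by omega)
            (Or.inr ⟨le_refl _, by omega⟩) ?_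
          intro y
          rcases hinv y with ⟨ha, hb⟩ | ⟨ha, hb⟩
          · exact Or.inl ⟨ha, hb⟩
          · exact Or.inr ⟨by omega, hb⟩
        · refine upd j j t1 (by omega) (by omega) htop (by omega)
            (Or.inl ⟨le_refl _, rfl⟩) ?_
          intro y
          rcases hinv y with ⟨ha, hb⟩ | ⟨ha, hb⟩
          · exact Or.inl ⟨by omega, hb⟩
          · exact Or.inr ⟨ha, hb⟩

lemma uw_mem_K (N : ℕ) : uw N ∈ K := by
  left
  apply good_kblocks
  refine ⟨⟨2*N, by simp [uw_length]; ring⟩, ?_⟩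
  intro i s hs
  obtain ⟨_, rfl⟩ := uw_getElem?.1 hs
  simp [spat]

lemma vw_not_mem_K (N : ℕ) : vw N ∉ K := by
  rintro (h | h)
  · have := (kblocks_good h).1
    rw [vw_length] at this
    omega
  · obtain ⟨i, hi, hget⟩ := List.mem_iff_getElem.1 h
    have : (vw N)[i]? = some top3 := List.getElem?_eq_some_iff.2 ⟨hi, hget⟩
    obtain ⟨_, htop⟩ := vw_getElem?.1 this
    unfold vpat at htop
    by_cases hc : i ≤ 3*N
    · rw [if_pos hc] at htop; exact dpat_ne_top i htop.symm
    · rw [if_neg hc] at htop; exact dpat_ne_top (i-1) htop.symm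

lemma not_fop_definable : ¬ FOpDefinable K := by
  rintro ⟨φ, -, hdef⟩
  set k := φ.qr with hk
  set N := 3^(k+1) with hN
  have hpow : 0 < (3:ℕ)^k := pow_pos (by norm_num) k
  have hpow1 : (3:ℕ)^(k+1) = 3^k * 3 := pow_succ 3 k
  have hsatu : FOp.Sat (uw N) (fun _ => 0) φ := by
    have := uw_mem_K N
    rw [hdef] at this
    exact this
  have hsatv : FOp.Sat (vw N) (fun _ => 0) φ := by
    apply EF N φ k 0 (6*N - 1) _ _ le_rfl (by omega) (by omega) le_rfl _ hsatu
    intro x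
    exact Or.inl ⟨le_refl 0, rfl⟩
  have : vw N ∈ K := by rw [hdef]; exact hsatv
  exact vw_not_mem_K N this

/-! ### Part 2: FO formula infrastructure -/

def fimp (φ ψ : FOf AB) : FOf AB := .or (.not φ) ψ

def bigOr (l : List (FOf AB)) : FOf AB := l.foldr .or (.lt 0 0)

lemma sat_fimp {u : List AB} {α : ℕ → ℕ} {φ ψ : FOf AB} :
    FOf.Sat u α (fimp φ ψ) ↔ (FOf.Sat u α φ → FOf.Sat u α ψ) := by
  simp only [fimp, FOf.Sat]
  tauto

lemma sat_bigOr {u : List AB} {α : ℕ → ℕ} {l : List (FOf AB)} :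
    FOf.Sat u α (bigOr l) ↔ ∃ φ ∈ l, FOf.Sat u α φ := by
  induction l with
  | nil => simp [bigOr, FOf.Sat]
  | cons ψ l ih =>
    simp only [bigOr, List.foldr_cons] at *
    show FOf.Sat u α (.or ψ _) ↔ _
    simp only [FOf.Sat, List.mem_cons]
    constructor
    · rintro (h | h)
      · exact ⟨ψ, Or.inl rfl, h⟩
      · obtain ⟨φ, hφ, hs⟩ := ih.1 h
        exact ⟨φ, Or.inr hφ, hs⟩
    · rintro ⟨φ, (rfl | hφ), hs⟩
      · exact Or.inl hs
      · exact Or.inr (ih.2 ⟨φ, hφ, hs⟩)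

/-- `y = x + 1` (via fresh variable `v`). -/
def succF (x y v : ℕ) : FOf AB :=
  .and (.lt x y) (.not (.ex v (.and (.lt x v) (.lt v y))))

lemma sat_succF {u : List AB} {α : ℕ → ℕ} {x y v : ℕ}
    (hvx : x ≠ v) (hvy : y ≠ v) (hy : α y < u.length) :
    FOf.Sat u α (succF x y v) ↔ α y = α x + 1 := by
  simp only [succF, FOf.Sat, Function.update_apply, eq_self_iff_true, if_true, if_neg hvx, if_neg hvy]
  constructor
  · rintro ⟨h1, h2⟩
    by_contra hne
    exact h2 ⟨α x + 1, by omega, by omega, by omega⟩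
  · intro h
    refine ⟨by omega, ?_⟩
    rintro ⟨i, hi, h1, h2⟩
    omega

/-- `y` is the minimum position. -/
def minF (y v : ℕ) : FOf AB := .all v (.le y v)

lemma sat_minF {u : List AB} {α : ℕ → ℕ} {y v : ℕ}
    (hyv : y ≠ v) (hn : 0 < u.length) :
    FOf.Sat u α (minF y v) ↔ α y = 0 := by
  simp only [minF, FOf.Sat, Function.update_apply, eq_self_iff_true, if_true, if_neg hyv]
  constructor
  · intro h
    have := h 0 hn
    omega
  · intro h i _
    omega

/-- `y` is the maximum position. -/
def maxF (y v : ℕ) : FOf AB := .all v (.le v y)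

lemma sat_maxF {u : List AB} {α : ℕ → ℕ} {y v : ℕ}
    (hyv : y ≠ v) (hy : α y < u.length) :
    FOf.Sat u α (maxF y v) ↔ α y = u.length - 1 := by
  simp only [maxF, FOf.Sat, Function.update_apply, eq_self_iff_true, if_true, if_neg hyv]
  constructor
  · intro h
    have := h (u.length - 1) (by omega)
    omega
  · intro h i hi
    omega

/-- All eight letters of the alphabet. -/
def allAB : List AB := [∅, {0}, {1}, {2}, {0,1}, {0,2}, {1,2}, {0,1,2}]

lemma mem_allAB : ∀ s : AB, s ∈ allAB := by decide

/-- the letter at `x` is `f` applied to the letter at `y`. -/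
def eqLtrF (x : ℕ) (f : AB → AB) (y : ℕ) : FOf AB :=
  bigOr (allAB.map (fun s => .and (.letter (f s) x) (.letter s y)))

lemma sat_eqLtrF {u : List AB} {α : ℕ → ℕ} {x y : ℕ} {f : AB → AB} :
    FOf.Sat u α (eqLtrF x f y) ↔
      ∃ s, u[α y]? = some s ∧ u[α x]? = some (f s) := by
  rw [eqLtrF, sat_bigOr]
  constructor
  · rintro ⟨φ, hφ, hs⟩
    simp only [List.mem_map] at hφ
    obtain ⟨s, -, rfl⟩ := hφ
    exact ⟨s, hs.2, hs.1⟩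
  · rintro ⟨s, h1, h2⟩
    refine ⟨.and (.letter (f s) x) (.letter s y), ?_, h2, h1⟩
    simp only [List.mem_map]
    exact ⟨s, mem_allAB s, rfl⟩

/-- the letter at `x` contains `t`. -/
def upF (t : Fin 3) (x : ℕ) : FOf AB :=
  bigOr ((allAB.filter (fun s => decide (t ∈ s))).map (fun s => .letter s x))

lemma sat_upF {u : List AB} {α : ℕ → ℕ} {x : ℕ} {t : Fin 3} :
    FOf.Sat u α (upF t x) ↔ ∃ s, u[α x]? = some s ∧ t ∈ s := by
  rw [upF, sat_bigOr]
  constructor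
  · rintro ⟨φ, hφ, hs⟩
    simp only [List.mem_map, List.mem_filter, decide_eq_true_iff] at hφ
    obtain ⟨s, ⟨-, hts⟩, rfl⟩ := hφ
    exact ⟨s, hs, hts⟩
  · rintro ⟨s, h1, h2⟩
    refine ⟨.letter s x, ?_, h1⟩
    simp only [List.mem_map, List.mem_filter, decide_eq_true_iff]
    exact ⟨s, ⟨mem_allAB s, h2⟩, rfl⟩

/-! ### The shift operation on letters -/

def sh (s : AB) : AB := s.image (· + 1)

def shn (e : ℕ) (s : AB) : AB := sh^[e] s

lemma shn_zero (s : AB) : shn 0 s = s := rfl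

lemma shn_succ (e : ℕ) (s : AB) : shn (e+1) s = sh (shn e s) :=
  Function.iterate_succ_apply' sh e s

lemma shn_add (d e : ℕ) (s : AB) : shn (d + e) s = shn d (shn e s) :=
  Function.iterate_add_apply sh d e s

lemma shn_three (s : AB) : shn 3 s = s := by
  revert s; decide

lemma shn_mod (e : ℕ) (s : AB) : shn e s = shn (e % 3) s := by
  induction e using Nat.strong_induction_on with
  | _ e ih =>
    by_cases h : e < 3
    · rw [Nat.mod_eq_of_lt h]
    · have he : e = (e - 3) + 3 := by omega
      rw [he, shn_add, shn_three, ih (e-3) (by omega)]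
      congr 1
      omega

lemma sh_ne_of_ne : ∀ s : AB, s ≠ ∅ → s ≠ top3 → shn 1 s ≠ s ∧ shn 2 s ≠ s := by
  decide

lemma shn_inj (e : ℕ) : Function.Injective (shn e) := by
  have : Function.Injective sh := by
    intro s t h
    have : ∀ s t : AB, sh s = sh t → s = t := by decide
    exact this s t h
  exact Function.Injective.iterate this e

lemma shn_cancel {s : AB} {d e : ℕ} (h1 : s ≠ ∅) (h2 : s ≠ top3)
    (h : shn d s = shn e s) : (d : Fin 3) = (e : Fin 3) := by
  have key : ∀ a b : ℕ, a ≤ b → shn a s = shn b s → (a : Fin 3) = (b : Fin 3) := by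
    intro a b hab heq
    have hb : b = (b - a) + a := by omega
    rw [hb, shn_add] at heq
    have hcomm : shn (b - a) (shn a s) = shn a (shn (b - a) s) := by
      rw [← shn_add, ← shn_add, Nat.add_comm]
    have : s = shn (b - a) s := shn_inj a (heq.trans hcomm)
    have hmod : shn ((b-a) % 3) s = s := by rw [← shn_mod]; exact this.symm
    have h3 : (b - a) % 3 = 0 := by
      have hne := sh_ne_of_ne s h1 h2
      have h012 : (b-a) % 3 = 0 ∨ (b-a) % 3 = 1 ∨ (b-a) % 3 = 2 := by omega
      rcases h012 with h0 | h0 | h0 <;> rw [h0] at hmod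
      · exact h0
      · exact absurd hmod hne.1
      · exact absurd hmod hne.2
    have : 3 ∣ (b - a) := Nat.dvd_of_mod_eq_zero h3
    obtain ⟨c, hc⟩ := this
    have : b = a + 3 * c := by omega
    subst this
    push_cast
    simp
  rcases le_total d e with hle | hle
  · exact key d e hle h
  · exact (key e d hle h.symm).symm

lemma mem_sh {t : Fin 3} {s : AB} : t ∈ sh s ↔ t - 1 ∈ s := by
  revert s t; decide

lemma natCast_fin3_sub_one {b : ℕ} (hb : 1 ≤ b) :
    ((b - 1 : ℕ) : Fin 3) = (b : Fin 3) - 1 := by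
  have : ((b - 1 : ℕ) : Fin 3) + 1 = (b : Fin 3) := by
    have h : (((b-1) + 1 : ℕ) : Fin 3) = (b : Fin 3) := by rw [Nat.sub_add_cancel hb]
    push_cast at h
    exact h
  exact eq_sub_of_add_eq this

/-! ### The phase formulas and their semantics -/

def ShiftRel (u : List AB) (b : ℕ) : Prop :=
  ∃ s t : AB, u[b-1]? = some s ∧ u[b]? = some t ∧ t = sh s

def shiftAt (u : List AB) (z : ℕ) : Prop := 1 ≤ z ∧ ShiftRel u z

def chainP (u : List AB) (a b : ℕ) : Prop := ∀ m, a < m → m ≤ b → shiftAt u m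

def baseP (u : List AB) (p : Fin 3) (b : ℕ) : Prop :=
  (b = 0 ∧ p = 0) ∨ u[b]? = some {p} ∨
  (1 ≤ b ∧ ¬ ShiftRel u b ∧ (∃ s, u[b]? = some s ∧ p ∈ s) ∧
    (∃ t, u[b-1]? = some t ∧ p - 1 ∈ t))

def phiP (u : List AB) (j : Fin 3) (p : ℕ) : Prop :=
  ∃ b, b ≤ p ∧ chainP u b p ∧ ∃ e : Fin 3,
    (∃ s, u[b]? = some s ∧ u[p]? = some (shn e.val s)) ∧ baseP u (j - e) b

def shiftF (z w v : ℕ) : FOf AB := .ex w (.and (succF w z v) (eqLtrF z sh w))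

lemma sat_shiftF {u : List AB} {α : ℕ → ℕ} {z w v : ℕ}
    (hzw : z ≠ w) (hzv : z ≠ v) (hwv : w ≠ v) :
    FOf.Sat u α (shiftF z w v) ↔ shiftAt u (α z) := by
  show (∃ i, i < u.length ∧ FOf.Sat u _ (.and _ _)) ↔ _
  constructor
  · rintro ⟨i, hi, hsucc, heq⟩
    rw [sat_eqLtrF] at heq
    obtain ⟨s, hs, hsh⟩ := heq
    rw [Function.update_self] at hs
    rw [Function.update_of_ne hzw] at hsh
    have hzn : α z < u.length := (List.getElem?_eq_some_iff.1 hsh).1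
    rw [sat_succF hwv (hzv) (by rwa [Function.update_of_ne hzw])] at hsucc
    rw [Function.update_of_ne hzw, Function.update_self] at hsucc
    refine ⟨by omega, s, sh s, ?_, hsh, rfl⟩
    rw [show α z - 1 = i by omega]
    exact hs
  · rintro ⟨h1, s, t, hs, ht, rfl⟩
    have hzn : α z < u.length := (List.getElem?_eq_some_iff.1 ht).1
    refine ⟨α z - 1, by omega, ?_, ?_⟩
    · rw [sat_succF hwv hzv (by rwa [Function.update_of_ne hzw])]
      rw [Function.update_of_ne hzw, Function.update_self]
      omega
    · rw [sat_eqLtrF]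
      refine ⟨s, ?_, ?_⟩
      · rw [Function.update_self]; exact hs
      · rw [Function.update_of_ne hzw]; exact ht

def chainF (y x z w v : ℕ) : FOf AB :=
  .all z (fimp (.and (.lt y z) (.le z x)) (shiftF z w v))

lemma sat_chainF {u : List AB} {α : ℕ → ℕ} {y x z w v : ℕ}
    (hyz : y ≠ z) (hxz : x ≠ z) (hzw : z ≠ w) (hzv : z ≠ v) (hwv : w ≠ v)
    (hx : α x < u.length) :
    FOf.Sat u α (chainF y x z w v) ↔ chainP u (α y) (α x) := by
  show (∀ i, i < u.length → FOf.Sat u _ (fimp _ _)) ↔ _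
  constructor
  · intro h m h1 h2
    have hm : m < u.length := by omega
    have := h m hm
    rw [sat_fimp] at this
    have hsat := this (by
      show FOf.Sat u _ (.and _ _)
      constructor
      · show Function.update α z m y < Function.update α z m z
        rw [Function.update_of_ne hyz, Function.update_self]
        exact h1
      · show Function.update α z m z ≤ Function.update α z m x
        rw [Function.update_of_ne hxz, Function.update_self]
        exact h2)
    rw [sat_shiftF hzw hzv hwv, Function.update_self] at hsat
    exact hsat
  · intro h i hi
    rw [sat_fimp]
    rintro ⟨h1, h2⟩
    have h1' : α y < i := by
      have hh := show Function.update α z i y < Function.update α z i z from h1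
      rwa [Function.update_of_ne hyz, Function.update_self] at hh
    have h2' : i ≤ α x := by
      have hh := show Function.update α z i z ≤ Function.update α z i x from h2
      rwa [Function.update_self, Function.update_of_ne hxz] at hh
    rw [sat_shiftF hzw hzv hwv, Function.update_self]
    exact h i h1' h2'

def baseF (p : Fin 3) (y w v : ℕ) : FOf AB :=
  .or (if p = 0 then minF y v else .lt y y)
  (.or (.letter {p} y)
  (.ex w (.and (succF w y v) (.and (.not (eqLtrF y sh w)) (.and (upF p y) (upF (p-1) w))))))

lemma sat_baseF {u : List AB} {α : ℕ → ℕ} {p : Fin 3} {y w v : ℕ}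
    (hyw : y ≠ w) (hyv : y ≠ v) (hwv : w ≠ v) (hy : α y < u.length) :
    FOf.Sat u α (baseF p y w v) ↔ baseP u p (α y) := by
  have hn : 0 < u.length := by omega
  show FOf.Sat u α (.or _ (.or _ _)) ↔ _
  unfold baseP
  constructor
  · rintro (h | h | h)
    · by_cases hp : p = 0
      · rw [if_pos hp] at h
        rw [sat_minF hyv hn] at h
        exact Or.inl ⟨h, hp⟩
      · rw [if_neg hp] at h
        exact absurd (show α y < α y from h) (lt_irrefl _)
    · exact Or.inr (Or.inl h)
    · obtain ⟨i, hi, hsucc, hneq, hup1, hup2⟩ := h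
      rw [sat_succF hwv hyv (by rwa [Function.update_of_ne hyw])] at hsucc
      rw [Function.update_of_ne hyw, Function.update_self] at hsucc
      rw [sat_upF] at hup1 hup2
      rw [Function.update_of_ne hyw] at hup1
      rw [Function.update_self] at hup2
      refine Or.inr (Or.inr ⟨by omega, ?_, hup1, by rw [show α y - 1 = i by omega]; exact hup2⟩)
      rintro ⟨s, t, hs, ht, rfl⟩
      apply hneq
      rw [sat_eqLtrF]
      refine ⟨s, ?_, ?_⟩
      · rw [Function.update_self, show i = α y - 1 by omega]; exact hs
      · rw [Function.update_of_ne hyw]; exact ht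
  · rintro (⟨h1, h2⟩ | h | ⟨h1, h2, ⟨s, hs, hps⟩, ⟨t, ht, hpt⟩⟩)
    · left
      rw [if_pos h2, sat_minF hyv hn]
      exact h1
    · exact Or.inr (Or.inl h)
    · refine Or.inr (Or.inr ⟨α y - 1, by omega, ?_, ?_, ?_, ?_⟩)
      · rw [sat_succF hwv hyv (by rwa [Function.update_of_ne hyw])]
        rw [Function.update_of_ne hyw, Function.update_self]
        omega
      · intro hcon
        rw [sat_eqLtrF] at hcon
        obtain ⟨s', hs', hsh'⟩ := hcon
        rw [Function.update_self] at hs'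
        rw [Function.update_of_ne hyw] at hsh'
        exact h2 ⟨s', sh s', hs', hsh', rfl⟩
      · rw [sat_upF, Function.update_of_ne hyw]
        exact ⟨s, hs, hps⟩
      · rw [sat_upF, Function.update_self]
        exact ⟨t, ht, hpt⟩

def phiF (j : Fin 3) (x : ℕ) : FOf AB :=
  .ex 2 (.and (.le 2 x) (.and (chainF 2 x 3 4 5)
    (bigOr (([0,1,2] : List (Fin 3)).map
      (fun e => .and (eqLtrF x (shn e.val) 2) (baseF (j - e) 2 4 5))))))

lemma sat_phiF {u : List AB} {α : ℕ → ℕ} {j : Fin 3} {x : ℕ}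
    (hx2 : x ≠ 2) (hx3 : x ≠ 3) (hx : α x < u.length) :
    FOf.Sat u α (phiF j x) ↔ phiP u j (α x) := by
  have hfin : ∀ e : Fin 3, e ∈ ([0,1,2] : List (Fin 3)) := by decide
  show (∃ i, i < u.length ∧ FOf.Sat u _ (.and _ (.and _ _))) ↔ _
  constructor
  · rintro ⟨i, hi, hle, hchain, hbig⟩
    have hle' : i ≤ α x := by
      have : Function.update α 2 i 2 ≤ Function.update α 2 i x := hle
      rwa [Function.update_self, Function.update_of_ne hx2] at this
    rw [sat_chainF (by norm_num) hx3 (by norm_num) (by norm_num) (by norm_num)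
      (by rwa [Function.update_of_ne hx2])] at hchain
    rw [Function.update_self, Function.update_of_ne hx2] at hchain
    rw [sat_bigOr] at hbig
    obtain ⟨φ, hφ, hsat⟩ := hbig
    simp only [List.mem_map] at hφ
    obtain ⟨e, -, rfl⟩ := hφ
    obtain ⟨heq, hbase⟩ := hsat
    rw [sat_eqLtrF] at heq
    obtain ⟨s, hs, hsh⟩ := heq
    rw [Function.update_self] at hs
    rw [Function.update_of_ne hx2] at hsh
    rw [sat_baseF (by norm_num) (by norm_num) (by norm_num)
      (by rw [Function.update_self]; omega)] at hbase
    rw [Function.update_self] at hbase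
    exact ⟨i, hle', hchain, e, ⟨s, hs, hsh⟩, hbase⟩
  · rintro ⟨b, hb, hchain, e, ⟨s, hs, hsh⟩, hbase⟩
    refine ⟨b, by omega, ?_, ?_, ?_⟩
    · show Function.update α 2 b 2 ≤ Function.update α 2 b x
      rw [Function.update_self, Function.update_of_ne hx2]
      exact hb
    · rw [sat_chainF (by norm_num) hx3 (by norm_num) (by norm_num) (by norm_num)
        (by rwa [Function.update_of_ne hx2])]
      rw [Function.update_self, Function.update_of_ne hx2]
      exact hchain
    · rw [sat_bigOr]
      refine ⟨_, List.mem_map.2 ⟨e, hfin e, rfl⟩, ?_, ?_⟩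
      · rw [sat_eqLtrF]
        refine ⟨s, ?_, ?_⟩
        · rw [Function.update_self]; exact hs
        · rw [Function.update_of_ne hx2]; exact hsh
      · rw [sat_baseF (by norm_num) (by norm_num) (by norm_num)
          (by rw [Function.update_self]; omega)]
        rw [Function.update_self]
        exact hbase

/-! ### Correctness of the phase formulas on good top-free words -/

lemma letter_not_top {u : List AB} (hTF : top3 ∉ u) {i : ℕ} {s : AB}
    (h : u[i]? = some s) : s ≠ top3 := by
  obtain ⟨hi, rfl⟩ := List.getElem?_eq_some_iff.1 h
  intro hc
  exact hTF (hc ▸ List.getElem_mem hi)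

lemma letter_mem {u : List AB} (hG : Good u) {i : ℕ} {s : AB}
    (h : u[i]? = some s) : (i : Fin 3) ∈ s := hG.2 i s h

lemma chain_letters {u : List AB} {b : ℕ} {s : AB} (hs : u[b]? = some s) :
    ∀ p, b ≤ p → chainP u b p → p < u.length → u[p]? = some (shn (p - b) s) := by
  intro p hbp
  induction p, hbp using Nat.le_induction with
  | base =>
    intro _ _
    simpa [shn_zero] using hs
  | succ p hbp ih =>
    intro hc hp
    obtain ⟨-, s', t, hs', ht, rfl⟩ := hc (p+1) (by omega) le_rfl
    have hup : u[p]? = some (shn (p - b) s) :=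
      ih (fun m h1 h2 => hc m h1 (by omega)) (by omega)
    rw [show p + 1 - 1 = p from rfl] at hs'
    rw [hup] at hs'
    obtain rfl := Option.some.inj hs'
    rw [ht]
    congr 1
    rw [show p + 1 - b = (p - b) + 1 by omega, shn_succ]

lemma AB_case : ∀ (s t : AB) (p q : Fin 3), s ≠ top3 → t ≠ top3 → p ≠ q →
    p ∈ s → q ∈ s → p - 1 ∈ t → q - 1 ∈ t → s = sh t := by
  decide

lemma natCast_fin3_split {b p : ℕ} (h : b ≤ p) :
    (p : Fin 3) = (b : Fin 3) + ((p - b : ℕ) : Fin 3) := by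
  have : ((b + (p - b) : ℕ) : Fin 3) = (b : Fin 3) + ((p - b : ℕ) : Fin 3) := by push_cast; rfl
  rw [← this, Nat.add_sub_cancel' h]

lemma phiP_sound {u : List AB} (hG : Good u) (hTF : top3 ∉ u) {j : Fin 3} {p : ℕ}
    (hp : p < u.length) (h : phiP u j p) : (p : Fin 3) = j := by
  obtain ⟨b, hb, hchain, e, ⟨s, hsb, hsp⟩, hbase⟩ := h
  have hchainL := chain_letters hsb p hb hchain hp
  rw [hsp] at hchainL
  have heq : shn e.val s = shn (p - b) s := Option.some.inj hchainL
  have hsne : s ≠ top3 := letter_not_top hTF hsb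
  have hmemb : (b : Fin 3) ∈ s := letter_mem hG hsb
  have hs0 : s ≠ ∅ := Finset.ne_empty_of_mem hmemb
  have hcast : ((p - b : ℕ) : Fin 3) = e := by
    have := shn_cancel hs0 hsne heq
    rw [Fin.cast_val_eq_self] at this
    exact this.symm
  have hpbe : (p : Fin 3) = (b : Fin 3) + e := by
    rw [natCast_fin3_split hb, hcast]
  suffices hbj : (b : Fin 3) = j - e by
    rw [hpbe, hbj, sub_add_cancel]
  rcases hbase with ⟨hb0, hje⟩ | hsb' | ⟨hb1, hnsr, ⟨s', hs', hps'⟩, ⟨t', ht', hpt'⟩⟩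
  · rw [hb0, hje]
    simp
  · rw [hsb] at hsb'
    obtain rfl := Option.some.inj hsb'
    simpa using hmemb
  · rw [hsb] at hs'
    obtain rfl := Option.some.inj hs'
    by_contra hne
    apply hnsr
    have hmembm : ((b : Fin 3) - 1) ∈ t' := by
      have := letter_mem hG ht'
      rwa [natCast_fin3_sub_one hb1] at this
    have : s = sh t' :=
      AB_case s t' (j - e) ((b : Fin 3)) hsne (letter_not_top hTF ht')
        (fun hc => hne hc.symm) hps' hmemb hpt' hmembm
    exact ⟨t', s, ht', hsb, this⟩

lemma phiP_complete {u : List AB} (hG : Good u) {j : Fin 3} {p : ℕ}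
    (hp : p < u.length) (hj : (p : Fin 3) = j) : phiP u j p := by
  classical
  have hex : ∃ b, b ≤ p ∧ chainP u b p :=
    ⟨p, le_rfl, fun m h1 h2 => absurd h1 (by omega)⟩
  set b := Nat.find hex with hbdef
  obtain ⟨hbp, hchain⟩ := Nat.find_spec hex
  have hkey : b = 0 ∨ ¬ ShiftRel u b := by
    by_contra hc
    push_neg at hc
    obtain ⟨hb0, hsr⟩ := hc
    have : b - 1 ≤ p ∧ chainP u (b-1) p := by
      refine ⟨by omega, fun m h1 h2 => ?_⟩
      rcases eq_or_ne m b with rfl | hne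
      · exact ⟨by omega, hsr⟩
      · exact hchain m (by omega) h2
    exact Nat.find_min hex (by omega) this
  obtain ⟨s, hsb⟩ : ∃ s, u[b]? = some s :=
    ⟨_, List.getElem?_eq_some_iff.2 ⟨by omega, rfl⟩⟩
  set e : Fin 3 := ((p - b : ℕ) : Fin 3) with hedef
  have hjb : j - e = (b : Fin 3) := by
    rw [← hj, natCast_fin3_split hbp, ← hedef, add_sub_cancel_right]
  refine ⟨b, hbp, hchain, e, ⟨s, hsb, ?_⟩, ?_⟩
  · have := chain_letters hsb p hbp hchain hp
    rw [this]
    congr 1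
    rw [shn_mod, hedef, Fin.val_natCast]
  · by_cases hb0 : b = 0
    · left
      refine ⟨hb0, ?_⟩
      rw [hjb, hb0]
      simp
    · have hnsr : ¬ ShiftRel u b := by
        rcases hkey with h | h
        · exact absurd h hb0
        · exact h
      refine Or.inr (Or.inr ⟨by omega, hnsr, ⟨s, hsb, ?_⟩, ?_⟩)
      · rw [hjb]
        exact letter_mem hG hsb
      · obtain ⟨t, hts⟩ : ∃ t, u[b-1]? = some t :=
          ⟨_, List.getElem?_eq_some_iff.2 ⟨by omega, rfl⟩⟩
        refine ⟨t, hts, ?_⟩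
        rw [hjb, ← natCast_fin3_sub_one (by omega)]
        exact letter_mem hG hts

lemma phiP_iff {u : List AB} (hG : Good u) (hTF : top3 ∉ u) {j : Fin 3} {p : ℕ}
    (hp : p < u.length) : phiP u j p ↔ (p : Fin 3) = j :=
  ⟨phiP_sound hG hTF hp, phiP_complete hG hp⟩

/-! ### The defining sentence for K -/

def A1F : FOf AB := .ex 0 (.and (minF 0 1) (phiF 0 0))
def A2F : FOf AB := .ex 0 (.and (maxF 0 1) (phiF 2 0))
def CF (j : Fin 3) : FOf AB := .all 0 (fimp (phiF j 0) (upF j 0))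
def DF : FOf AB := .all 0 (.all 1 (fimp (succF 0 1 2)
  (.and (fimp (phiF 0 0) (phiF 1 1))
  (.and (fimp (phiF 1 0) (phiF 2 1)) (fimp (phiF 2 0) (phiF 0 1))))))
def EF' : FOf AB := .all 0 (.and (.not (.and (phiF 0 0) (phiF 1 0)))
  (.and (.not (.and (phiF 0 0) (phiF 2 0))) (.not (.and (phiF 1 0) (phiF 2 0)))))

def KF : FOf AB :=
  .or (.ex 0 (.letter top3 0))
  (.or (.not (.ex 0 (.le 0 0)))
    (.and A1F (.and A2F (.and (CF 0) (.and (CF 1) (.and (CF 2) (.and DF EF')))))))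

lemma fin3_cast_eq_iff (m : ℕ) (k : Fin 3) : ((m : ℕ) : Fin 3) = k ↔ m % 3 = k.val := by
  rw [Fin.ext_iff, Fin.val_natCast]

lemma sat_A1F {u : List AB} {α : ℕ → ℕ} :
    FOf.Sat u α A1F ↔ (0 < u.length ∧ phiP u 0 0) := by
  show (∃ i, i < u.length ∧ FOf.Sat u _ (.and _ _)) ↔ _
  constructor
  · rintro ⟨i, hi, hmin, hphi⟩
    rw [sat_minF (by norm_num) (by omega), Function.update_self] at hmin
    subst hmin
    rw [sat_phiF (by norm_num) (by norm_num) (by rwa [Function.update_self]),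
      Function.update_self] at hphi
    exact ⟨by omega, hphi⟩
  · rintro ⟨hn, hphi⟩
    refine ⟨0, hn, ?_, ?_⟩
    · rw [sat_minF (by norm_num) (by omega), Function.update_self]
    · rw [sat_phiF (by norm_num) (by norm_num) (by rwa [Function.update_self]),
        Function.update_self]
      exact hphi

lemma sat_A2F {u : List AB} {α : ℕ → ℕ} :
    FOf.Sat u α A2F ↔ (0 < u.length ∧ phiP u 2 (u.length - 1)) := by
  show (∃ i, i < u.length ∧ FOf.Sat u _ (.and _ _)) ↔ _
  constructor
  · rintro ⟨i, hi, hmax, hphi⟩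
    rw [sat_maxF (by norm_num) (by rwa [Function.update_self]),
      Function.update_self] at hmax
    subst hmax
    rw [sat_phiF (by norm_num) (by norm_num) (by rwa [Function.update_self]),
      Function.update_self] at hphi
    exact ⟨by omega, hphi⟩
  · rintro ⟨hn, hphi⟩
    refine ⟨u.length - 1, by omega, ?_, ?_⟩
    · rw [sat_maxF (by norm_num) (by rw [Function.update_self]; omega), Function.update_self]
    · rw [sat_phiF (by norm_num) (by norm_num) (by rw [Function.update_self]; omega),
        Function.update_self]
      exact hphi

lemma sat_CF {u : List AB} {α : ℕ → ℕ} {j : Fin 3} :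
    FOf.Sat u α (CF j) ↔
      ∀ i, i < u.length → phiP u j i → ∃ s, u[i]? = some s ∧ j ∈ s := by
  show (∀ i, i < u.length → FOf.Sat u _ (fimp _ _)) ↔ _
  constructor
  · intro h i hi hphi
    have := h i hi
    rw [sat_fimp] at this
    have hup := this (by
      rw [sat_phiF (by norm_num) (by norm_num) (by rwa [Function.update_self]),
        Function.update_self]
      exact hphi)
    rw [sat_upF, Function.update_self] at hup
    exact hup
  · intro h i hi
    rw [sat_fimp]
    intro hphi
    rw [sat_phiF (by norm_num) (by norm_num) (by rwa [Function.update_self]),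
      Function.update_self] at hphi
    rw [sat_upF, Function.update_self]
    exact h i hi hphi

lemma sat_DF {u : List AB} {α : ℕ → ℕ} :
    FOf.Sat u α DF ↔
      ∀ i, i + 1 < u.length →
        ((phiP u 0 i → phiP u 1 (i+1)) ∧ (phiP u 1 i → phiP u 2 (i+1)) ∧
         (phiP u 2 i → phiP u 0 (i+1))) := by
  have upd01 : ∀ (i i' : ℕ),
      (Function.update (Function.update α 0 i) 1 i') 0 = i := by
    intro i i'
    rw [Function.update_of_ne (by norm_num), Function.update_self]
  have upd11 : ∀ (i i' : ℕ),
      (Function.update (Function.update α 0 i) 1 i') 1 = i' := by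
    intro i i'
    rw [Function.update_self]
  show (∀ i, i < u.length → ∀ i', i' < u.length → FOf.Sat u _ (fimp _ _)) ↔ _
  constructor
  · intro h i hi
    have hi' : i < u.length := by omega
    have := h i hi' (i+1) (by omega)
    rw [sat_fimp] at this
    have hsat := this (by
      rw [sat_succF (by norm_num) (by norm_num) (by rw [upd11]; omega), upd01, upd11])
    obtain ⟨h1, h2, h3⟩ := hsat
    rw [sat_fimp] at h1 h2 h3
    rw [sat_phiF (by norm_num) (by norm_num) (by rw [upd01]; omega), upd01] at h1 h2 h3
    rw [sat_phiF (by norm_num) (by norm_num) (by rw [upd11]; omega), upd11] at h1 h2 h3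
    exact ⟨h1, h2, h3⟩
  · intro h i hi i' hi'
    rw [sat_fimp]
    intro hsucc
    rw [sat_succF (by norm_num) (by norm_num) (by rwa [upd11]), upd01, upd11] at hsucc
    subst hsucc
    have hstep := h i (by omega)
    refine ⟨?_, ?_, ?_⟩ <;>
      · rw [sat_fimp]
        intro hphi
        rw [sat_phiF (by norm_num) (by norm_num) (by rw [upd01]; omega), upd01] at hphi
        rw [sat_phiF (by norm_num) (by norm_num) (by rw [upd11]; omega), upd11]
        first
        | exact hstep.1 hphi
        | exact hstep.2.1 hphi
        | exact hstep.2.2 hphi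

lemma sat_EF' {u : List AB} {α : ℕ → ℕ} :
    FOf.Sat u α EF' ↔
      ∀ i, i < u.length →
        (¬(phiP u 0 i ∧ phiP u 1 i) ∧ ¬(phiP u 0 i ∧ phiP u 2 i) ∧
         ¬(phiP u 1 i ∧ phiP u 2 i)) := by
  show (∀ i, i < u.length → FOf.Sat u _ (.and _ (.and _ _))) ↔ _
  have hrw : ∀ (i : ℕ) (hi : i < u.length) (j : Fin 3),
      FOf.Sat u (Function.update α 0 i) (phiF j 0) ↔ phiP u j i := by
    intro i hi j
    rw [sat_phiF (by norm_num) (by norm_num) (by rwa [Function.update_self]),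
      Function.update_self]
  constructor
  · intro h i hi
    obtain ⟨h1, h2, h3⟩ := h i hi
    refine ⟨?_, ?_, ?_⟩
    · rintro ⟨ha, hb⟩; exact h1 ⟨(hrw i hi 0).2 ha, (hrw i hi 1).2 hb⟩
    · rintro ⟨ha, hb⟩; exact h2 ⟨(hrw i hi 0).2 ha, (hrw i hi 2).2 hb⟩
    · rintro ⟨ha, hb⟩; exact h3 ⟨(hrw i hi 1).2 ha, (hrw i hi 2).2 hb⟩
  · intro h i hi
    obtain ⟨h1, h2, h3⟩ := h i hi
    refine ⟨?_, ?_, ?_⟩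
    · rintro ⟨ha, hb⟩; exact h1 ⟨(hrw i hi 0).1 ha, (hrw i hi 1).1 hb⟩
    · rintro ⟨ha, hb⟩; exact h2 ⟨(hrw i hi 0).1 ha, (hrw i hi 2).1 hb⟩
    · rintro ⟨ha, hb⟩; exact h3 ⟨(hrw i hi 1).1 ha, (hrw i hi 2).1 hb⟩

lemma fin3_cases (j : Fin 3) : j = 0 ∨ j = 1 ∨ j = 2 := by
  revert j; decide

lemma sat_KF {u : List AB} {α : ℕ → ℕ} : FOf.Sat u α KF ↔ u ∈ K := by
  have htopcase : top3 ∈ u → FOf.Sat u α KF := by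
    intro htop
    obtain ⟨i, hi, heq⟩ := List.mem_iff_getElem.1 htop
    refine Or.inl ⟨i, hi, ?_⟩
    show u[Function.update α 0 i 0]? = some top3
    rw [Function.update_self]
    exact List.getElem?_eq_some_iff.2 ⟨hi, heq⟩
  constructor
  · rintro (h | h | hmain)
    · obtain ⟨i, hi, hlet⟩ := h
      have : u[Function.update α 0 i 0]? = some top3 := hlet
      rw [Function.update_self] at this
      obtain ⟨hlt, heq⟩ := List.getElem?_eq_some_iff.1 this
      exact Or.inr (heq ▸ List.getElem_mem hlt)
    · have hn : u.length = 0 := by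
        by_contra hn
        exact h ⟨0, by omega, le_rfl⟩
      have : u = [] := List.length_eq_zero_iff.1 hn
      exact Or.inl (this ▸ KBlocks.nil)
    · obtain ⟨hA1, hA2, hC0, hC1, hC2, hD, hE⟩ := hmain
      rw [sat_A1F] at hA1
      rw [sat_A2F] at hA2
      rw [sat_CF] at hC0 hC1 hC2
      rw [sat_DF] at hD
      rw [sat_EF'] at hE
      obtain ⟨hn, hphi0⟩ := hA1
      have hstep : ∀ i, i + 1 < u.length → ∀ j : Fin 3, phiP u j i → phiP u (j+1) (i+1) := by
        intro i hi j hj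
        rcases fin3_cases j with rfl | rfl | rfl
        · exact (hD i hi).1 hj
        · exact (hD i hi).2.1 hj
        · have := (hD i hi).2.2 hj
          have h20 : (2 + 1 : Fin 3) = 0 := by decide
          rw [h20]
          exact this
      have hind : ∀ i, i < u.length → phiP u ((i : ℕ) : Fin 3) i := by
        intro i
        induction i with
        | zero => intro _; simpa using hphi0
        | succ i ih =>
          intro hi
          have h1 := ih (by omega)
          have h2 := hstep i hi _ h1
          have hcast : (((i+1 : ℕ)) : Fin 3) = ((i : ℕ) : Fin 3) + 1 := by push_cast; rfl
          rw [hcast]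
          exact h2
      have hexcl : ∀ i, i < u.length → ∀ j : Fin 3, phiP u j i → ((i : ℕ) : Fin 3) = j := by
        intro i hi j hj
        have hii := hind i hi
        obtain ⟨e1, e2, e3⟩ := hE i hi
        rcases fin3_cases j with rfl | rfl | rfl <;>
          rcases fin3_cases (((i : ℕ)) : Fin 3) with hc | hc | hc <;>
          rw [hc] at hii ⊢ <;>
          first
          | rfl
          | tauto
      left
      apply good_kblocks
      constructor
      · have := hexcl (u.length - 1) (by omega) 2 hA2.2
        rw [fin3_cast_eq_iff] at this
        have h2 : (2 : Fin 3).val = 2 := rfl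
        rw [h2] at this
        omega
      · intro i s hs
        have hi : i < u.length := (List.getElem?_eq_some_iff.1 hs).1
        have hii := hind i hi
        rcases fin3_cases ((i : ℕ) : Fin 3) with hc | hc | hc <;> rw [hc] at hii <;> rw [hc]
        · obtain ⟨s', hs', hmem⟩ := hC0 i hi hii
          obtain rfl := Option.some.inj (hs.symm.trans hs')
          exact hmem
        · obtain ⟨s', hs', hmem⟩ := hC1 i hi hii
          obtain rfl := Option.some.inj (hs.symm.trans hs')
          exact hmem
        · obtain ⟨s', hs', hmem⟩ := hC2 i hi hii
          obtain rfl := Option.some.inj (hs.symm.trans hs')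
          exact hmem
  · rintro (hK | htop)
    · by_cases htop : top3 ∈ u
      · exact htopcase htop
      · by_cases hn : u.length = 0
        · refine Or.inr (Or.inl ?_)
          intro hcon
          obtain ⟨i, hi, -⟩ := hcon
          omega
        · refine Or.inr (Or.inr ?_)
          have hG := kblocks_good hK
          have hdvd := hG.1
          refine ⟨?_, ?_, ?_, ?_, ?_, ?_, ?_⟩
          · rw [sat_A1F]
            exact ⟨by omega, phiP_complete hG (by omega) (by simp)⟩
          · rw [sat_A2F]
            refine ⟨by omega, phiP_complete hG (by omega) ?_⟩
            rw [fin3_cast_eq_iff]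
            show _ % 3 = 2
            omega
          iterate 3
            · rw [sat_CF]
              intro i hi hphi
              have hc := phiP_sound hG htop hi hphi
              refine ⟨u[i], List.getElem?_eq_some_iff.2 ⟨hi, rfl⟩, ?_⟩
              rw [← hc]
              exact hG.2 i u[i] (List.getElem?_eq_some_iff.2 ⟨hi, rfl⟩)
          · rw [sat_DF]
            intro i hi
            refine ⟨?_, ?_, ?_⟩ <;> intro hphi <;>
              have hc := phiP_sound hG htop (by omega : i < u.length) hphi <;>
              apply phiP_complete hG (by omega) <;>
              push_cast <;> rw [hc] <;> decide
          · rw [sat_EF']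
            intro i hi
            refine ⟨?_, ?_, ?_⟩ <;> rintro ⟨ha, hb⟩ <;>
              have h1 := phiP_sound hG htop hi ha <;>
              have h2 := phiP_sound hG htop hi hb <;>
              rw [h1] at h2 <;> exact absurd h2 (by decide)
    · exact htopcase htop

lemma fo_definable_K : FODefinable K := by
  refine ⟨KF, by decide, ?_⟩
  ext u
  exact sat_KF.symm


/-- there is a language over a powerset alphabet that is
monotone and FO-definable but not FO⁺-definable, namely
`K = (↑a↑b↑c)* + A*⊤A*` over `A = 𝒫({a,b,c})`. Hence Lyndon's preservation
theorem fails on finite words. -/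
theorem lyndon_fails_on_words :
    MonotoneLang K ∧ FODefinable K ∧ ¬ FOpDefinable K := by
  exact ⟨monotone_K, fo_definable_K, not_fop_definable⟩
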